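/- For every x ∈ Z^3 with x_1 < 0, m̄(x) = −|h| + |m̄(0)|·e^{−γ·(|x_1|−1)}, where m̄(0) denotes the value of m̄ at the origin. -/

import Mathlib

open Real Filter

/-- Points of `ℤ³`. -/
abbrev Z3 : Type := ℤ × ℤ × ℤ

/-- Nearest-neighbor relation `x ∼ y`, i.e. `|x − y| = 1`. -/
def adj (x y : Z3) : Prop :=
  |x.1 - y.1| + |x.2.1 - y.2.1| + |x.2.2 - y.2.2| = 1

instance : DecidableRel adj := fun x y => by unfold adj; infer_instance

/-- The six nearest neighbors of a site. -/
def nbrs (x : Z3) : Finset Z3 :=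
  {(x.1 + 1, x.2), (x.1 - 1, x.2), (x.1, x.2.1 + 1, x.2.2), (x.1, x.2.1 - 1, x.2.2),
    (x.1, x.2.1, x.2.2 + 1), (x.1, x.2.1, x.2.2 - 1)}

/-- `h_x = h·1_{x₁<0}`. -/
noncomputable def hfun (h : ℝ) (x : Z3) : ℝ := if x.1 < 0 then h else 0

/-- One-step transition probability of simple random walk: `p(x,y) = (1/6)·1_{x∼y}`. -/
noncomputable def pker (x y : Z3) : ℝ := if adj x y then 1 / 6 else 0

/-- `n`-step transition probabilities: `p⁰(x,y) = 1_{x=y}`,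
`p^{n+1}(x,y) = Σ_z pⁿ(x,z)·p(z,y)`. -/
noncomputable def pn : ℕ → Z3 → Z3 → ℝ
  | 0, x, y => if x = y then 1 else 0
  | n + 1, x, y => ∑ z ∈ nbrs y, pn n x z * pker z y

/-- `ω = 6J/(1+6J)`. -/
noncomputable def om (J : ℝ) : ℝ := 6 * J / (1 + 6 * J)

/-- `m̄(x) = Σ_{n≥0} ωⁿ Σ_{y∈ℤ³} pⁿ(x,y)·h_y/(1+6J)`. -/
noncomputable def mbar (J h : ℝ) (x : Z3) : ℝ :=
  ∑' n : ℕ, om J ^ n * ∑' y : Z3, pn n x y * hfun h y / (1 + 6 * J)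

/-- the inverse hyperbolic cosine on `[1, ∞)`: `arccosh y = log (y + √(y² − 1))`. -/
noncomputable def arccosh (y : ℝ) : ℝ := Real.log (y + Real.sqrt (y ^ 2 - 1))

/-- `γ = arccosh(1 + 1/(2J))`, the unique positive solution of `3 = (6J/(1+6J))(2 + cosh γ)`. -/
noncomputable def gam (J : ℝ) : ℝ := arccosh (1 + 1 / (2 * J))


section Aux
lemma adj_iff (x z : Z3) : adj x z ↔
    (x.1 - z.1).natAbs + (x.2.1 - z.2.1).natAbs + (x.2.2 - z.2.2).natAbs = 1 := by
  unfold adj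
  simp only [Int.abs_eq_natAbs]
  omega

lemma adj_symm (x z : Z3) : adj x z ↔ adj z x := by
  simp only [adj_iff]; omega

lemma mem_nbrs {x z : Z3} : z ∈ nbrs x ↔ adj x z := by
  simp only [nbrs, adj_iff, Finset.mem_insert, Finset.mem_singleton, Prod.ext_iff]
  omega

lemma nbrs_sum (x : Z3) (f : Z3 → ℝ) :
    ∑ z ∈ nbrs x, f z = f (x.1 + 1, x.2) + f (x.1 - 1, x.2) + f (x.1, x.2.1 + 1, x.2.2)
      + f (x.1, x.2.1 - 1, x.2.2) + f (x.1, x.2.1, x.2.2 + 1) + f (x.1, x.2.1, x.2.2 - 1) := by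
  unfold nbrs
  rw [Finset.sum_insert (by simp only [Finset.mem_insert, Finset.mem_singleton, Prod.ext_iff]; push_neg; omega),
    Finset.sum_insert (by simp only [Finset.mem_insert, Finset.mem_singleton, Prod.ext_iff]; push_neg; omega),
    Finset.sum_insert (by simp only [Finset.mem_insert, Finset.mem_singleton, Prod.ext_iff]; push_neg; omega),
    Finset.sum_insert (by simp only [Finset.mem_insert, Finset.mem_singleton, Prod.ext_iff]; push_neg; omega),
    Finset.sum_insert (by simp only [Finset.mem_insert, Finset.mem_singleton, Prod.ext_iff]; push_neg; omega),
    Finset.sum_singleton]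
  ring
end Aux

lemma pn_nonneg (n : ℕ) (x y : Z3) : 0 ≤ pn n x y := by
  induction n generalizing y with
  | zero => unfold pn; positivity
  | succ n ih =>
    unfold pn
    apply Finset.sum_nonneg
    intro z _
    have : 0 ≤ pker z y := by unfold pker; positivity
    exact mul_nonneg (ih z) this

lemma pn_first_step (n : ℕ) (x y : Z3) :
    pn (n + 1) x y = ∑ z ∈ nbrs x, pker x z * pn n z y := by
  induction n generalizing y with
  | zero =>
    show (∑ z ∈ nbrs y, pn 0 x z * pker z y) = _
    have h1 : ∑ z ∈ nbrs y, pn 0 x z * pker z y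
        = if x ∈ nbrs y then pker x y else 0 := by
      rw [← Finset.sum_ite_eq (nbrs y) x (fun z => pker z y)]
      apply Finset.sum_congr rfl
      intro z _
      unfold pn
      by_cases hxz : x = z <;> simp [hxz]
    have h2 : ∑ z ∈ nbrs x, pker x z * pn 0 z y
        = if y ∈ nbrs x then pker x y else 0 := by
      rw [← Finset.sum_ite_eq' (nbrs x) y (fun z => pker x z)]
      apply Finset.sum_congr rfl
      intro z _
      unfold pn
      by_cases hzy : z = y <;> simp [hzy]
    rw [h1, h2]
    by_cases hxy : adj x y
    · simp [mem_nbrs, hxy, (adj_symm x y).mp hxy, ← adj_symm]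
    · have hyx : ¬ adj y x := fun hc => hxy ((adj_symm y x).mp hc)
      simp [mem_nbrs, hxy, hyx, pker]
  | succ n ih =>
    show (∑ z ∈ nbrs y, pn (n+1) x z * pker z y) = _
    calc ∑ z ∈ nbrs y, pn (n+1) x z * pker z y
        = ∑ z ∈ nbrs y, (∑ w ∈ nbrs x, pker x w * pn n w z) * pker z y := by
          apply Finset.sum_congr rfl; intro z _; rw [ih]
      _ = ∑ z ∈ nbrs y, ∑ w ∈ nbrs x, pker x w * (pn n w z * pker z y) := by
          apply Finset.sum_congr rfl; intro z _
          rw [Finset.sum_mul]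
          apply Finset.sum_congr rfl; intro w _; ring
      _ = ∑ w ∈ nbrs x, ∑ z ∈ nbrs y, pker x w * (pn n w z * pker z y) := Finset.sum_comm
      _ = ∑ w ∈ nbrs x, pker x w * ∑ z ∈ nbrs y, pn n w z * pker z y := by
          apply Finset.sum_congr rfl; intro w _
          rw [Finset.mul_sum]
      _ = ∑ w ∈ nbrs x, pker x w * pn (n+1) w y := rfl

/-- box of radius n around x -/
noncomputable def box (n : ℕ) (x : Z3) : Finset Z3 :=
  Finset.Icc (x.1 - n, x.2.1 - n, x.2.2 - n) (x.1 + n, x.2.1 + n, x.2.2 + n)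

lemma pn_vanish (n : ℕ) (x : Z3) : ∀ y ∉ box n x, pn n x y = 0 := by
  induction n with
  | zero =>
    intro y hy
    unfold pn
    have : x ≠ y := by
      rintro rfl
      apply hy
      simp [box, Finset.mem_Icc, Prod.le_def]
    simp [this]
  | succ n ih =>
    intro y hy
    show (∑ z ∈ nbrs y, pn n x z * pker z y) = 0
    apply Finset.sum_eq_zero
    intro z hz
    have hz' : z ∉ box n x := by
      intro hmem
      apply hy
      simp only [box, Finset.mem_Icc, Prod.le_def] at hmem ⊢
      simp only [nbrs, Finset.mem_insert, Finset.mem_singleton, Prod.ext_iff] at hz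
      push_cast at hmem ⊢
      omega
    rw [ih z hz', zero_mul]

lemma summable_pn (n : ℕ) (x : Z3) (c : Z3 → ℝ) :
    Summable (fun y => pn n x y * c y) :=
  summable_of_ne_finset_zero (s := box n x)
    (fun y hy => by rw [pn_vanish n x y hy, zero_mul])

lemma tsum_pn_le (n : ℕ) (x : Z3) : ∑' y : Z3, pn n x y ≤ 1 := by
  induction n generalizing x with
  | zero =>
    rw [tsum_eq_single x (fun y hy => by unfold pn; simp [(Ne.symm hy : ¬ x = y)])]
    unfold pn; simp
  | succ n ih =>
    have hsumm : ∀ z, Summable (fun y => pn n z y) := by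
      intro z
      have := summable_pn n z (fun _ => (1:ℝ))
      simpa using this
    calc ∑' y : Z3, pn (n+1) x y
        = ∑' y : Z3, ∑ z ∈ nbrs x, pker x z * pn n z y := by
          apply tsum_congr; intro y; rw [pn_first_step]
      _ = ∑ z ∈ nbrs x, ∑' y : Z3, pker x z * pn n z y := by
          apply Summable.tsum_finsetSum
          intro z _
          exact ((hsumm z).mul_left _)
      _ = ∑ z ∈ nbrs x, pker x z * ∑' y : Z3, pn n z y := by
          apply Finset.sum_congr rfl; intro z _; exact tsum_mul_left
      _ ≤ ∑ z ∈ nbrs x, pker x z * 1 := by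
          apply Finset.sum_le_sum
          intro z hz
          have hk : 0 ≤ pker x z := by unfold pker; positivity
          exact mul_le_mul_of_nonneg_left (ih z) hk
      _ ≤ 1 := by
          rw [nbrs_sum x (fun z => pker x z * 1)]
          have : ∀ z : Z3, pker x z ≤ 1/6 := by intro z; unfold pker; split <;> norm_num
          have h0 : ∀ z : Z3, 0 ≤ pker x z := by intro z; unfold pker; positivity
          simp only [mul_one]
          linarith [this (x.1+1, x.2), this (x.1-1, x.2), this (x.1, x.2.1+1, x.2.2),
            this (x.1, x.2.1-1, x.2.2), this (x.1, x.2.1, x.2.2+1), this (x.1, x.2.1, x.2.2-1)]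

noncomputable def Sfun (J h : ℝ) (n : ℕ) (x : Z3) : ℝ :=
  ∑' y : Z3, pn n x y * hfun h y / (1 + 6 * J)

lemma om_nonneg {J : ℝ} (hJ : 0 < J) : 0 ≤ om J := by unfold om; positivity

lemma om_lt_one {J : ℝ} (hJ : 0 < J) : om J < 1 := by
  unfold om
  rw [div_lt_one (by linarith)]
  linarith

lemma abs_hfun_le (h : ℝ) (y : Z3) : |hfun h y| ≤ |h| := by
  unfold hfun; split
  · exact le_refl _
  · simp

lemma summable_S_inner (J h : ℝ) (n : ℕ) (x : Z3) :
    Summable (fun y => |pn n x y * hfun h y / (1 + 6 * J)|) := by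
  have : (fun y => |pn n x y * hfun h y / (1 + 6 * J)|)
      = fun y => pn n x y * (|hfun h y / (1 + 6 * J)|) := by
    funext y
    rw [mul_div_assoc, abs_mul, abs_of_nonneg (pn_nonneg n x y)]
  rw [this]
  exact summable_pn n x _

lemma S_abs_le {J : ℝ} (hJ : 0 < J) (h : ℝ) (n : ℕ) (x : Z3) :
    |Sfun J h n x| ≤ |h| / (1 + 6 * J) := by
  have h1 : |Sfun J h n x| ≤ ∑' y : Z3, |pn n x y * hfun h y / (1 + 6 * J)| := by
    have hs : Summable (fun y => ‖pn n x y * hfun h y / (1 + 6 * J)‖) := by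
      simpa only [Real.norm_eq_abs] using summable_S_inner J h n x
    have := norm_tsum_le_tsum_norm hs
    simp only [Real.norm_eq_abs] at this; exact this
  refine h1.trans ?_
  have h2 : ∀ y : Z3, |pn n x y * hfun h y / (1 + 6 * J)|
      ≤ pn n x y * (|h| / (1 + 6 * J)) := by
    intro y
    rw [mul_div_assoc, abs_mul, abs_of_nonneg (pn_nonneg n x y)]
    apply mul_le_mul_of_nonneg_left _ (pn_nonneg n x y)
    rw [abs_div, abs_of_pos (by linarith : (0:ℝ) < 1 + 6 * J)]
    exact div_le_div_of_nonneg_right (abs_hfun_le h y) (by linarith)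
  calc ∑' y : Z3, |pn n x y * hfun h y / (1 + 6 * J)|
      ≤ ∑' y : Z3, pn n x y * (|h| / (1 + 6 * J)) :=
        Summable.tsum_le_tsum h2 (summable_S_inner J h n x) (summable_pn n x _)
    _ = (∑' y : Z3, pn n x y) * (|h| / (1 + 6 * J)) := by
        exact tsum_mul_right
    _ ≤ 1 * (|h| / (1 + 6 * J)) := by
        apply mul_le_mul_of_nonneg_right (tsum_pn_le n x)
        positivity
    _ = |h| / (1 + 6 * J) := one_mul _

lemma summable_main {J : ℝ} (hJ : 0 < J) (h : ℝ) (x : Z3) :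
    Summable (fun n : ℕ => om J ^ n * Sfun J h n x) := by
  apply Summable.of_abs
  have hg : Summable (fun n : ℕ => om J ^ n * (|h| / (1 + 6 * J))) :=
    (summable_geometric_of_lt_one (om_nonneg hJ) (om_lt_one hJ)).mul_right _
  refine Summable.of_nonneg_of_le (fun n => abs_nonneg _) (fun n => ?_) hg
  rw [abs_mul, abs_pow, abs_of_nonneg (om_nonneg hJ)]
  exact mul_le_mul_of_nonneg_left (S_abs_le hJ h n x) (pow_nonneg (om_nonneg hJ) n)

lemma mbar_eq_tsum (J h : ℝ) (x : Z3) : mbar J h x = ∑' n : ℕ, om J ^ n * Sfun J h n x := rfl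

lemma S_zero (J h : ℝ) (x : Z3) : Sfun J h 0 x = hfun h x / (1 + 6 * J) := by
  unfold Sfun
  rw [tsum_eq_single x]
  · unfold pn; simp
  · intro y hy
    unfold pn
    simp [(Ne.symm hy : ¬ x = y)]

lemma S_succ (J h : ℝ) (n : ℕ) (x : Z3) :
    Sfun J h (n + 1) x = ∑ z ∈ nbrs x, pker x z * Sfun J h n z := by
  unfold Sfun
  calc ∑' y : Z3, pn (n+1) x y * hfun h y / (1 + 6 * J)
      = ∑' y : Z3, ∑ z ∈ nbrs x, pker x z * (pn n z y * hfun h y / (1 + 6 * J)) := by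
        apply tsum_congr; intro y
        rw [pn_first_step, Finset.sum_mul, Finset.sum_div]
        apply Finset.sum_congr rfl; intro z _; ring
    _ = ∑ z ∈ nbrs x, ∑' y : Z3, pker x z * (pn n z y * hfun h y / (1 + 6 * J)) := by
        apply Summable.tsum_finsetSum
        intro z _
        apply Summable.mul_left
        have : (fun y => pn n z y * hfun h y / (1 + 6 * J))
            = fun y => pn n z y * (hfun h y / (1 + 6 * J)) := by
          funext y; ring
        rw [this]
        exact summable_pn n z _
    _ = ∑ z ∈ nbrs x, pker x z * ∑' y : Z3, pn n z y * hfun h y / (1 + 6 * J) := by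
        apply Finset.sum_congr rfl; intro z _
        exact tsum_mul_left

lemma mbar_fixed {J : ℝ} (hJ : 0 < J) (h : ℝ) (x : Z3) :
    mbar J h x = hfun h x / (1 + 6 * J) + om J / 6 * ∑ z ∈ nbrs x, mbar J h z := by
  rw [mbar_eq_tsum, Summable.tsum_eq_zero_add (summable_main hJ h x)]
  rw [pow_zero, one_mul, S_zero]
  congr 1
  calc ∑' n : ℕ, om J ^ (n + 1) * Sfun J h (n + 1) x
      = ∑' n : ℕ, om J * ∑ z ∈ nbrs x, pker x z * (om J ^ n * Sfun J h n z) := by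
        apply tsum_congr; intro n
        rw [S_succ, pow_succ', Finset.mul_sum, Finset.mul_sum]
        apply Finset.sum_congr rfl; intro z _; ring
    _ = om J * ∑' n : ℕ, ∑ z ∈ nbrs x, pker x z * (om J ^ n * Sfun J h n z) := tsum_mul_left
    _ = om J * ∑ z ∈ nbrs x, pker x z * ∑' n : ℕ, om J ^ n * Sfun J h n z := by
        congr 1
        rw [Summable.tsum_finsetSum (fun z _ => ((summable_main hJ h z).mul_left _))]
        apply Finset.sum_congr rfl; intro z _
        exact tsum_mul_left
    _ = om J / 6 * ∑ z ∈ nbrs x, mbar J h z := by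
        rw [Finset.mul_sum, Finset.mul_sum]
        apply Finset.sum_congr rfl; intro z hz
        have : pker x z = 1 / 6 := by
          unfold pker
          rw [if_pos (mem_nbrs.mp hz)]
        rw [this, ← mbar_eq_tsum]
        ring

lemma mbar_bound {J : ℝ} (hJ : 0 < J) (h : ℝ) (x : Z3) : |mbar J h x| ≤ |h| := by
  rw [mbar_eq_tsum]
  have hg : Summable (fun n : ℕ => om J ^ n * (|h| / (1 + 6 * J))) :=
    (summable_geometric_of_lt_one (om_nonneg hJ) (om_lt_one hJ)).mul_right _
  have hle : ∀ n : ℕ, ‖om J ^ n * Sfun J h n x‖ ≤ om J ^ n * (|h| / (1 + 6 * J)) := by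
    intro n
    rw [Real.norm_eq_abs, abs_mul, abs_pow, abs_of_nonneg (om_nonneg hJ)]
    exact mul_le_mul_of_nonneg_left (S_abs_le hJ h n x) (pow_nonneg (om_nonneg hJ) n)
  have hs : Summable (fun n : ℕ => ‖om J ^ n * Sfun J h n x‖) :=
    Summable.of_nonneg_of_le (fun n => norm_nonneg _) hle hg
  have h1 := norm_tsum_le_tsum_norm hs
  rw [Real.norm_eq_abs] at h1
  refine h1.trans ?_
  have h2 : ∑' n : ℕ, ‖om J ^ n * Sfun J h n x‖ ≤ ∑' n : ℕ, om J ^ n * (|h| / (1 + 6 * J)) := by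
    exact Summable.tsum_le_tsum hle hs hg
  refine h2.trans ?_
  rw [tsum_mul_right, tsum_geometric_of_lt_one (om_nonneg hJ) (om_lt_one hJ)]
  have hom : 1 - om J = 1 / (1 + 6 * J) := by
    unfold om; field_simp; ring
  rw [hom]
  rw [one_div, inv_inv, mul_div_cancel₀ _ (by positivity : (1:ℝ) + 6 * J ≠ 0)]

lemma fp_unique {J : ℝ} (hJ : 0 < J) {h : ℝ} (u v : Z3 → ℝ) (K : ℝ)
    (hu : ∀ x, u x = hfun h x / (1 + 6 * J) + om J / 6 * ∑ z ∈ nbrs x, u z)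
    (hv : ∀ x, v x = hfun h x / (1 + 6 * J) + om J / 6 * ∑ z ∈ nbrs x, v z)
    (hb : ∀ x, |u x - v x| ≤ K) : ∀ x, u x = v x := by
  have claim : ∀ k : ℕ, ∀ x : Z3, |u x - v x| ≤ om J ^ k * K := by
    intro k
    induction k with
    | zero => intro x; simpa using hb x
    | succ k ih =>
      intro x
      have hd : u x - v x = om J / 6 * ∑ z ∈ nbrs x, (u z - v z) := by
        rw [hu x, hv x, Finset.sum_sub_distrib]
        ring
      have hsum : |∑ z ∈ nbrs x, (u z - v z)| ≤ 6 * (om J ^ k * K) := by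
        rw [nbrs_sum x (fun z => u z - v z)]
        have b1 := ih (x.1 + 1, x.2); have b2 := ih (x.1 - 1, x.2)
        have b3 := ih (x.1, x.2.1 + 1, x.2.2); have b4 := ih (x.1, x.2.1 - 1, x.2.2)
        have b5 := ih (x.1, x.2.1, x.2.2 + 1); have b6 := ih (x.1, x.2.1, x.2.2 - 1)
        rw [abs_le] at b1 b2 b3 b4 b5 b6 ⊢
        constructor <;> [linarith [b1.1, b2.1, b3.1, b4.1, b5.1, b6.1];
          linarith [b1.2, b2.2, b3.2, b4.2, b5.2, b6.2]]
      rw [hd, abs_mul, abs_of_nonneg (by linarith [om_nonneg hJ] : (0:ℝ) ≤ om J / 6)]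
      calc om J / 6 * |∑ z ∈ nbrs x, (u z - v z)| ≤ om J / 6 * (6 * (om J ^ k * K)) := by
            apply mul_le_mul_of_nonneg_left hsum
            linarith [om_nonneg hJ]
        _ = om J ^ (k + 1) * K := by ring
  intro x
  have htend : Tendsto (fun k : ℕ => om J ^ k * K) atTop (nhds 0) := by
    have := (tendsto_pow_atTop_nhds_zero_of_lt_one (om_nonneg hJ) (om_lt_one hJ)).mul_const K
    simpa using this
  have hle : |u x - v x| ≤ 0 := ge_of_tendsto' htend (fun k => claim k x)
  have : u x - v x = 0 := by
    have := abs_nonneg (u x - v x)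
    have habs : |u x - v x| = 0 := le_antisymm hle this
    exact abs_eq_zero.mp habs
  linarith [this]

lemma fp_scalar {J a b c : ℝ} (hD : (1:ℝ) + 6 * J ≠ 0)
    (hkey : a * (1 + 6 * J) = b + J * c) : a = b / (1 + 6 * J) + om J / 6 * c := by
  unfold om
  field_simp
  linear_combination hkey

lemma exp_gam (J : ℝ) (hJ : 0 < J) :
    Real.exp (gam J) = (1 + 1 / (2 * J)) + Real.sqrt ((1 + 1 / (2 * J)) ^ 2 - 1) := by
  unfold gam arccosh
  apply Real.exp_log
  have h1 : (0:ℝ) < 1 + 1 / (2 * J) := by positivity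
  have h2 : 0 ≤ Real.sqrt ((1 + 1 / (2 * J)) ^ 2 - 1) := Real.sqrt_nonneg _
  linarith

lemma gam_facts (J : ℝ) (hJ : 0 < J) :
    J * (Real.exp (gam J) + Real.exp (-gam J)) = 2 * J + 1 ∧ 1 < Real.exp (gam J) := by
  have hy : (1:ℝ) < 1 + 1 / (2 * J) := by
    have : (0:ℝ) < 1 / (2 * J) := by positivity
    linarith
  set y : ℝ := 1 + 1 / (2 * J) with hydef
  have hnn : (0:ℝ) ≤ y ^ 2 - 1 := by nlinarith
  have hs2 : Real.sqrt (y ^ 2 - 1) ^ 2 = y ^ 2 - 1 := Real.sq_sqrt hnn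
  set s : ℝ := Real.sqrt (y ^ 2 - 1) with hsdef
  have hs0 : 0 ≤ s := Real.sqrt_nonneg _
  have hE : Real.exp (gam J) = y + s := exp_gam J hJ
  have hmul : (y + s) * (y - s) = 1 := by nlinarith
  have hF : Real.exp (-gam J) = y - s := by
    rw [Real.exp_neg, hE]
    exact inv_eq_of_mul_eq_one_right hmul
  refine ⟨?_, ?_⟩
  · rw [hE, hF, hydef]
    field_simp
    ring
  · rw [hE]; linarith

lemma gam_nonneg (J : ℝ) (hJ : 0 < J) : 0 ≤ gam J := by
  have h1 := (gam_facts J hJ).2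
  by_contra hneg
  push_neg at hneg
  have h2 : Real.exp (gam J) < Real.exp 0 := Real.exp_lt_exp.mpr hneg
  rw [Real.exp_zero] at h2
  linarith

noncomputable def Acoef (J h : ℝ) : ℝ := -h / (1 + Real.exp (gam J))

noncomputable def gfun (J h : ℝ) (k : ℤ) : ℝ :=
  if k < 0 then h + Acoef J h * Real.exp (gam J * (k + 1))
  else -Acoef J h * Real.exp (-gam J * k)

lemma gfun_fp {J : ℝ} (hJ : 0 < J) (h : ℝ) (k : ℤ) :
    gfun J h k = (if k < 0 then h else 0) / (1 + 6 * J)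
      + om J / 6 * (gfun J h (k + 1) + gfun J h (k - 1) + 4 * gfun J h k) := by
  have hD : (1:ℝ) + 6 * J ≠ 0 := by positivity
  have hsum' : J * (Real.exp (gam J) + Real.exp (-gam J)) = 2 * J + 1 := (gam_facts J hJ).1
  have hE1 : (1:ℝ) < Real.exp (gam J) := (gam_facts J hJ).2
  have hA2 : h = -Acoef J h * (1 + Real.exp (gam J)) := by
    unfold Acoef
    field_simp
  by_cases hneg : k < 0
  · by_cases hk1 : k = -1
    · subst hk1
      simp only [gfun]
      norm_num [Real.exp_zero]
      refine fp_scalar hD ?_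
      linear_combination (-(Acoef J h)) * hsum' + J * hA2
    · have c0 : (k < 0) = True := eq_true hneg
      have c1 : (k + 1 < 0) = True := eq_true (by omega)
      have c2 : (k - 1 < 0) = True := eq_true (by omega)
      simp only [gfun, c0, c1, c2, if_true]
      push_cast
      refine fp_scalar hD ?_
      have e1 : Real.exp (gam J * ((k:ℝ) + 1 + 1))
          = Real.exp (gam J * ((k:ℝ) + 1)) * Real.exp (gam J) := by
        rw [← Real.exp_add]; congr 1; ring
      have e2 : Real.exp (gam J * ((k:ℝ) - 1 + 1))
          = Real.exp (gam J * ((k:ℝ) + 1)) * Real.exp (-gam J) := by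
        rw [← Real.exp_add]; congr 1; ring
      rw [e1, e2]
      linear_combination (-(Acoef J h * Real.exp (gam J * ((k:ℝ) + 1)))) * hsum'
  · by_cases hk0 : k = 0
    · subst hk0
      simp only [gfun]
      norm_num [Real.exp_zero]
      have key : (-Acoef J h) * (1 + 6 * J)
          = 0 + J * (-(Acoef J h * Real.exp (-gam J)) + (h + Acoef J h)
            + -(4 * Acoef J h)) := by
        linear_combination Acoef J h * hsum' - J * hA2
      have := fp_scalar hD key
      simpa using this
    · have c0 : (k < 0) = False := eq_false hneg
      have c1 : (k + 1 < 0) = False := eq_false (by omega)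
      have c2 : (k - 1 < 0) = False := eq_false (by omega)
      simp only [gfun, c0, c1, c2, if_false]
      push_cast
      refine fp_scalar hD ?_
      have e1 : Real.exp (-gam J * ((k:ℝ) + 1))
          = Real.exp (-gam J * (k:ℝ)) * Real.exp (-gam J) := by
        rw [← Real.exp_add]; congr 1; ring
      have e2 : Real.exp (-gam J * ((k:ℝ) - 1))
          = Real.exp (-gam J * (k:ℝ)) * Real.exp (gam J) := by
        rw [← Real.exp_add]; congr 1; ring
      rw [e1, e2]
      linear_combination (Acoef J h * Real.exp (-gam J * (k:ℝ))) * hsum'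

lemma Acoef_pos {J h : ℝ} (hJ : 0 < J) (hh : h < 0) : 0 < Acoef J h := by
  unfold Acoef
  apply div_pos (by linarith)
  have := Real.exp_pos (gam J)
  linarith

lemma gfun_bound {J h : ℝ} (hJ : 0 < J) (hh : h < 0) (k : ℤ) :
    |gfun J h k| ≤ |h| + Acoef J h := by
  have hA := Acoef_pos hJ hh
  have hg := gam_nonneg J hJ
  unfold gfun
  split
  case isTrue hk =>
    have hc : (k:ℝ) + 1 ≤ 0 := by exact_mod_cast (by omega : k + 1 ≤ 0)
    have hexp : Real.exp (gam J * ((k:ℝ) + 1)) ≤ 1 :=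
      Real.exp_le_one_iff.mpr (mul_nonpos_of_nonneg_of_nonpos hg hc)
    have hexp0 : 0 < Real.exp (gam J * ((k:ℝ) + 1)) := Real.exp_pos _
    have h1 : |h + Acoef J h * Real.exp (gam J * ((k:ℝ) + 1))|
        ≤ |h| + |Acoef J h * Real.exp (gam J * ((k:ℝ) + 1))| := abs_add_le _ _
    refine h1.trans ?_
    rw [abs_mul, abs_of_pos hA, abs_of_pos hexp0]
    nlinarith
  case isFalse hk =>
    have hc : 0 ≤ (k:ℝ) := by exact_mod_cast (by omega : (0:ℤ) ≤ k)
    have hexp : Real.exp (-gam J * (k:ℝ)) ≤ 1 := by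
      apply Real.exp_le_one_iff.mpr
      nlinarith
    have hexp0 : 0 < Real.exp (-gam J * (k:ℝ)) := Real.exp_pos _
    rw [abs_mul, abs_neg, abs_of_pos hA, abs_of_pos hexp0]
    nlinarith [abs_nonneg h]

theorem statement12_aux (J h : ℝ) (hJ : 0 < J) (hh : h < 0) :
    ∀ x : Z3, x.1 < 0 →
      mbar J h x =
        -|h| + |mbar J h (0, 0, 0)| * Real.exp (-gam J * ((|x.1| : ℤ) - 1 : ℤ)) := by
  intro x hx
  have Mfp : ∀ z : Z3, (fun z : Z3 => gfun J h z.1) z = hfun h z / (1 + 6 * J)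
      + om J / 6 * ∑ w ∈ nbrs z, (fun z : Z3 => gfun J h z.1) w := by
    intro z
    simp only []
    rw [nbrs_sum z (fun w => gfun J h w.1)]
    have hz := gfun_fp hJ h z.1
    unfold hfun
    linear_combination hz
  have hbd : ∀ z : Z3, |mbar J h z - (fun z : Z3 => gfun J h z.1) z|
      ≤ |h| + (|h| + Acoef J h) := by
    intro z
    have h1 := mbar_bound hJ h z
    have h2 := gfun_bound hJ hh z.1
    have h3 := abs_add_le (mbar J h z) (-(gfun J h z.1))
    rw [abs_neg] at h3
    simp only []
    rw [sub_eq_add_neg]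
    refine h3.trans ?_
    linarith
  have huniq := fp_unique hJ (mbar J h) (fun z : Z3 => gfun J h z.1) _
    (mbar_fixed hJ h) Mfp hbd
  have hApos := Acoef_pos hJ hh
  have h0 : mbar J h (0, 0, 0) = -Acoef J h := by
    rw [huniq (0, 0, 0)]
    show gfun J h 0 = _
    unfold gfun
    norm_num
  have habs : |mbar J h (0, 0, 0)| = Acoef J h := by
    rw [h0, abs_neg, abs_of_pos hApos]
  rw [huniq x, habs]
  show gfun J h x.1 = _
  unfold gfun
  rw [if_pos hx]
  have hx' : |x.1| = -x.1 := abs_of_neg hx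
  rw [hx']
  push_cast
  rw [abs_of_neg hh]
  have harg : -gam J * (-(x.1:ℝ) - 1) = gam J * ((x.1:ℝ) + 1) := by ring
  rw [harg]
  ring


theorem statement12 (J h : ℝ) (hJ : 0 < J) (hh : h < 0) :
    ∀ x : Z3, x.1 < 0 →
      mbar J h x =
        -|h| + |mbar J h (0, 0, 0)| * Real.exp (-gam J * ((|x.1| : ℤ) - 1 : ℤ)) := by
  exact statement12_aux J h hJ hh
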